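/- Let k be a field and let f, g ∈ k[y_1,…,y_t][x] be polynomials with deg_x f = r, deg_x g = s and r + s ≥ 1, such that f and g, viewed as polynomials in the variables y_1,…,y_t,x, are homogeneous of total degrees m and n respectively (so m ≥ r and n ≥ s). If Res(f,g,x) ≠ 0, then Res(f,g,x) is a homogeneous polynomial in k[y_1,…,y_t] of total degree m·s + n·r − r·s. -/

import Mathlib

open Polynomial

/-- The `(r+s) × (r+s)` Sylvester matrix of `f` and `g` (viewed as having degrees `r`
and `s`): the first `s` rows carry the shifted coefficient vectors of `f`, the last `r`
rows carry the shifted coefficient vectors of `g`. -/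
noncomputable def sylvester {R : Type*} [CommRing R] (f g : R[X]) (r s : ℕ) :
    Matrix (Fin (r + s)) (Fin (r + s)) R :=
  Matrix.of fun i j =>
    if (i : ℕ) < s then
      (if (i : ℕ) ≤ (j : ℕ) ∧ (j : ℕ) ≤ (i : ℕ) + r then f.coeff ((i : ℕ) + r - (j : ℕ)) else 0)
    else
      (if (i : ℕ) - s ≤ (j : ℕ) ∧ (j : ℕ) ≤ ((i : ℕ) - s) + s then
        g.coeff (((i : ℕ) - s) + s - (j : ℕ)) else 0)

/-- The resultant `Res(f, g, x)` of two univariate polynomials over `R`, with respect to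
their degrees in `x`: the determinant of the Sylvester matrix. -/
noncomputable def res {R : Type*} [CommRing R] (f g : R[X]) : R :=
  (_root_.sylvester f g f.natDegree g.natDegree).det

private lemma sum_ite_lt_range (r s : ℕ) (c1 c2 : ℤ) :
    ∑ a ∈ Finset.range (r + s), (if a < s then c1 else c2) = s * c1 + r * c2 := by
  rw [Finset.range_eq_Ico, ← Finset.sum_Ico_consecutive _ (Nat.zero_le s) (by omega : s ≤ r + s)]
  have h1 : ∑ a ∈ Finset.Ico 0 s, (if a < s then c1 else c2) = s * c1 := by
    rw [Finset.sum_congr rfl (fun a ha => if_pos (Finset.mem_Ico.mp ha).2)]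
    simp [mul_comm]
  have h2 : ∑ a ∈ Finset.Ico s (r + s), (if a < s then c1 else c2) = r * c2 := by
    rw [Finset.sum_congr rfl (fun a ha => if_neg (by
      have := (Finset.mem_Ico.mp ha).1; omega))]
    simp [mul_comm]
  rw [h1, h2]

private lemma sylvester_prod_isHomogeneous {k : Type*} [Field k] {t : ℕ}
    (m n r s : ℕ) (hmr : r ≤ m) (hns : s ≤ n)
    (f g : Polynomial (MvPolynomial (Fin t) k))
    (hf : (((MvPolynomial.optionEquivLeft k (Fin t)).symm f)).IsHomogeneous m)
    (hg : (((MvPolynomial.optionEquivLeft k (Fin t)).symm g)).IsHomogeneous n)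
    (σ : Equiv.Perm (Fin (r + s))) :
    (∏ i, _root_.sylvester f g r s (σ i) i).IsHomogeneous (m * s + n * r - r * s) := by
  by_cases hz : ∀ i, _root_.sylvester f g r s (σ i) i ≠ 0
  case neg =>
    push_neg at hz
    obtain ⟨i, hi⟩ := hz
    have hz0 : (∏ j, _root_.sylvester f g r s (σ j) j) = 0 :=
      Finset.prod_eq_zero (Finset.mem_univ i) hi
    rw [hz0]
    exact MvPolynomial.isHomogeneous_zero _ _ _
  case pos =>
  set d : Fin (r + s) → ℕ := fun i =>
    if (σ i : ℕ) < s then (m - r) + ((i : ℕ) - (σ i : ℕ))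
    else (n - s) + ((i : ℕ) + s - (σ i : ℕ)) with hd
  have hcond : ∀ i : Fin (r + s),
      ((σ i : ℕ) < s → (σ i : ℕ) ≤ (i : ℕ) ∧ (i : ℕ) ≤ (σ i : ℕ) + r) ∧
      (¬ (σ i : ℕ) < s → (σ i : ℕ) - s ≤ (i : ℕ) ∧ (i : ℕ) ≤ ((σ i : ℕ) - s) + s) := by
    intro i
    have h := hz i
    simp only [_root_.sylvester, Matrix.of_apply] at h
    constructor
    · intro hlt
      rw [if_pos hlt] at h
      by_contra hc
      exact h (if_neg hc)
    · intro hlt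
      rw [if_neg hlt] at h
      by_contra hc
      exact h (if_neg hc)
  have hent : ∀ i : Fin (r + s), (_root_.sylvester f g r s (σ i) i).IsHomogeneous (d i) := by
    intro i
    have hc := hcond i
    by_cases hlt : (σ i : ℕ) < s
    · obtain ⟨h1, h2⟩ := hc.1 hlt
      simp only [_root_.sylvester, Matrix.of_apply, hd, if_pos hlt, if_pos (And.intro h1 h2)]
      exact hf.coeff_isHomogeneous_of_optionEquivLeft_symm _ _ (by omega)
    · obtain ⟨h1, h2⟩ := hc.2 hlt
      simp only [_root_.sylvester, Matrix.of_apply, hd, if_neg hlt, if_pos (And.intro h1 h2)]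
      exact hg.coeff_isHomogeneous_of_optionEquivLeft_symm _ _ (by omega)
  have h1 : ∀ i : Fin (r + s), (d i : ℤ) =
      (i : ℤ) + (if (σ i : ℕ) < s then (m : ℤ) - r - (σ i : ℕ) else (n : ℤ) - (σ i : ℕ)) := by
    intro i
    have hc := hcond i
    by_cases hlt : (σ i : ℕ) < s
    · have := hc.1 hlt
      simp only [hd, if_pos hlt]
      omega
    · have := hc.2 hlt
      simp only [hd, if_neg hlt]
      omega
  have hsumZ : ∑ i, (d i : ℤ) = (m : ℤ) * s + (n : ℤ) * r - (r : ℤ) * s := by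
    rw [Finset.sum_congr rfl (fun i _ => h1 i), Finset.sum_add_distrib]
    have hre : ∑ i : Fin (r + s),
        (if (σ i : ℕ) < s then (m : ℤ) - r - (σ i : ℕ) else (n : ℤ) - (σ i : ℕ))
        = ∑ a : Fin (r + s), (if (a : ℕ) < s then (m : ℤ) - r - (a : ℕ) else (n : ℤ) - (a : ℕ)) :=
      Equiv.sum_comp σ (fun a : Fin (r + s) => if (a : ℕ) < s then (m : ℤ) - r - (a : ℕ) else (n : ℤ) - (a : ℕ))
    rw [hre]
    have hsplit : ∀ a : Fin (r + s),
        (if (a : ℕ) < s then (m : ℤ) - r - (a : ℕ) else (n : ℤ) - (a : ℕ))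
        = (if (a : ℕ) < s then (m : ℤ) - r else (n : ℤ)) - (a : ℤ) := by
      intro a; by_cases hlt : (a : ℕ) < s <;> simp [hlt]
    rw [Finset.sum_congr rfl (fun a _ => hsplit a), Finset.sum_sub_distrib]
    have := sum_ite_lt_range r s ((m : ℤ) - r) (n : ℤ)
    rw [show (∑ a : Fin (r + s), if (a : ℕ) < s then (m : ℤ) - r else (n : ℤ))
        = ∑ a ∈ Finset.range (r + s), (if a < s then (m : ℤ) - r else (n : ℤ)) from
      Fin.sum_univ_eq_sum_range (fun a : ℕ => if a < s then (m : ℤ) - r else (n : ℤ)) (r + s), this]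
    ring
  have hle : r * s ≤ m * s + n * r :=
    le_trans (Nat.mul_le_mul_right s hmr) (Nat.le_add_right _ _)
  have hDeq : ∑ i, d i = m * s + n * r - r * s := by
    zify [hle]
    push_cast at hsumZ ⊢
    linarith [hsumZ]
  have := MvPolynomial.IsHomogeneous.prod Finset.univ _ d (fun i _ => hent i)
  rwa [hDeq] at this

theorem resultant_of_homogeneous_isHomogeneous
    {k : Type*} [Field k] (t : ℕ) (m n r s : ℕ) (hrs : 1 ≤ r + s)
    (hmr : r ≤ m) (hns : s ≤ n)
    (f g : Polynomial (MvPolynomial (Fin t) k))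
    (hr : f.natDegree = r) (hs : g.natDegree = s)
    (hf : (((MvPolynomial.optionEquivLeft k (Fin t)).symm f)).IsHomogeneous m)
    (hg : (((MvPolynomial.optionEquivLeft k (Fin t)).symm g)).IsHomogeneous n)
    (hres : res f g ≠ 0) :
    (res f g).IsHomogeneous (m * s + n * r - r * s) := by
  subst hr hs
  unfold res
  rw [Matrix.det_apply]
  apply MvPolynomial.IsHomogeneous.sum
  intro σ _
  have key := sylvester_prod_isHomogeneous m n _ _ hmr hns f g hf hg σ
  rcases Int.units_eq_one_or (Equiv.Perm.sign σ) with h | h <;> rw [h]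
  · simpa using key
  · simpa using key.neg
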